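/- Let n ≥ 4 be an integer, f(u) = (1 − u²)·u^{n−3}, v = √((n−3)/(n−1)) and a_max = (2/(n−1))·v^{n−3}. For a ≤ a_max let u_a be the unique element of [v, ∞) with f(u_a) = a, and set c_a = ((n−1)·u_a − (n−3)/u_a)/2. Then the map a ↦ c_a is a strictly decreasing bijection from (−∞, a_max] onto [0, ∞), and c_0 = 1. -/

import Mathlib

/-- `f u = (1 - u²) u^(n-3)` for `u > 0`. -/
noncomputable def gtF (n : ℕ) (u : ℝ) : ℝ := (1 - u ^ 2) * u ^ (n - 3)

/-- `v = √((n-3)/(n-1))`. -/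
noncomputable def gtV (n : ℕ) : ℝ := Real.sqrt (((n : ℝ) - 3) / ((n : ℝ) - 1))

/-- `a_max = (2/(n-1)) v^(n-3)`. -/
noncomputable def gtAmax (n : ℕ) : ℝ := 2 / ((n : ℝ) - 1) * gtV n ^ (n - 3)

private lemma gt_cast1 (k : ℕ) : (((k+4:ℕ)):ℝ) - 1 = (k:ℝ)+3 := by push_cast; ring

private lemma gt_cast3 (k : ℕ) : (((k+4:ℕ)):ℝ) - 3 = (k:ℝ)+1 := by push_cast; ring

private lemma gtV_sq (k : ℕ) : gtV (k + 4) ^ 2 = ((k:ℝ)+1)/((k:ℝ)+3) := by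
  rw [gtV, gt_cast1, gt_cast3, Real.sq_sqrt (by positivity)]

private lemma gtV_pos (k : ℕ) : 0 < gtV (k + 4) := by
  rw [gtV, gt_cast1, gt_cast3]
  exact Real.sqrt_pos.2 (by positivity)

private lemma gtF_deriv (k : ℕ) (u : ℝ) :
    HasDerivAt (gtF (k+4)) (u^k * (((k:ℝ)+1) - ((k:ℝ)+3)*u^2)) u := by
  have h1 := (hasDerivAt_pow 2 u).const_sub 1
  have h2 := hasDerivAt_pow (k+1) u
  have h : HasDerivAt (fun x => (1 - x^2) * x^(k+1)) _ u := h1.mul h2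
  have he : gtF (k+4) = fun x => (1 - x^2) * x^(k+1) := rfl
  rw [he]
  convert h using 1
  simp only [Nat.add_sub_cancel, pow_one]
  push_cast
  ring

private lemma gtF_anti (k : ℕ) : StrictAntiOn (gtF (k+4)) (Set.Ici (gtV (k+4))) := by
  have hv := gtV_pos k
  apply strictAntiOn_of_deriv_neg (convex_Ici _)
  · have he : gtF (k+4) = fun x => (1 - x^2) * x^(k+1) := rfl
    rw [he]; fun_prop
  · intro u hu
    rw [interior_Ici] at hu
    rw [(gtF_deriv k u).deriv]
    have hu0 : 0 < u := hv.trans hu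
    have h2 : gtV (k+4)^2 < u^2 := by nlinarith [Set.mem_Ioi.1 hu]
    rw [gtV_sq k] at h2
    rw [div_lt_iff₀ (by positivity)] at h2
    have hk : (0:ℝ) < u^k := pow_pos hu0 k
    have hneg : ((k:ℝ)+1) - ((k:ℝ)+3)*u^2 < 0 := by nlinarith
    exact mul_neg_of_pos_of_neg hk hneg

private lemma gtF_v (k : ℕ) : gtF (k+4) (gtV (k+4)) = gtAmax (k+4) := by
  have hsq := gtV_sq k
  have he : gtF (k+4) (gtV (k+4)) = (1 - gtV (k+4)^2) * gtV (k+4)^(k+1) := rfl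
  have ha : gtAmax (k+4) = 2/((k:ℝ)+3) * gtV (k+4)^(k+1) := by
    have h43 : k+4-3 = k+1 := by omega
    rw [gtAmax, gt_cast1, h43]
  rw [he, ha, hsq]
  have : (1:ℝ) - ((k:ℝ)+1)/((k:ℝ)+3) = 2/((k:ℝ)+3) := by
    field_simp
    norm_num
  rw [this]

private lemma cc_lt (k : ℕ) {x y : ℝ} (hx : 0 < x) (hxy : x < y) :
    (((k:ℝ)+3)*x - ((k:ℝ)+1)/x)/2 < (((k:ℝ)+3)*y - ((k:ℝ)+1)/y)/2 := by
  have hy : 0 < y := hx.trans hxy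
  have h1 : ((k:ℝ)+1)/y < ((k:ℝ)+1)/x :=
    div_lt_div_of_pos_left (by positivity) hx hxy
  have h2 : ((k:ℝ)+3)*x < ((k:ℝ)+3)*y := by nlinarith
  linarith

private lemma cc_v (k : ℕ) :
    (((k:ℝ)+3)*gtV (k+4) - ((k:ℝ)+1)/gtV (k+4))/2 = 0 := by
  have hv := gtV_pos k
  have hsq := gtV_sq k
  have hne : gtV (k+4) ≠ 0 := hv.ne'
  have hsq' : gtV (k+4)^2 * ((k:ℝ)+3) = (k:ℝ)+1 := by
    rw [hsq]; field_simp
  field_simp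
  nlinarith [hsq']

/-- For `n ≥ 4`, if `U` sends each `a ≤ a_max` to the unique `u_a ∈ [v, ∞)` with
`f(u_a) = a`, then the cone-angle coefficient
`c_a = ((n-1) u_a - (n-3)/u_a)/2` is a strictly decreasing bijection from
`(-∞, a_max]` onto `[0, ∞)`, and `c_0 = 1`. -/
theorem cone_angle_coefficient_bijection (n : ℕ) (hn : 4 ≤ n) (U : ℝ → ℝ)
    (hU : ∀ a : ℝ, a ≤ gtAmax n → U a ∈ Set.Ici (gtV n) ∧ gtF n (U a) = a) :
    StrictAntiOn (fun a : ℝ => (((n : ℝ) - 1) * U a - ((n : ℝ) - 3) / U a) / 2)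
        (Set.Iic (gtAmax n)) ∧
    Set.BijOn (fun a : ℝ => (((n : ℝ) - 1) * U a - ((n : ℝ) - 3) / U a) / 2)
        (Set.Iic (gtAmax n)) (Set.Ici (0 : ℝ)) ∧
    (((n : ℝ) - 1) * U 0 - ((n : ℝ) - 3) / U 0) / 2 = 1 := by
  obtain ⟨k, rfl⟩ : ∃ k, n = k + 4 := ⟨n - 4, by omega⟩
  simp only [gt_cast1, gt_cast3]
  have hv := gtV_pos k
  have hanti := gtF_anti k
  have hinj := hanti.injOn
  -- U is strictly decreasing on (-∞, a_max]
  have hUlt : ∀ {a b : ℝ}, a ≤ gtAmax (k+4) → b ≤ gtAmax (k+4) → a < b → U b < U a := by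
    intro a b ha hb hab
    obtain ⟨hUa, hfa⟩ := hU a ha
    obtain ⟨hUb, hfb⟩ := hU b hb
    by_contra h
    push_neg at h
    rcases eq_or_lt_of_le h with heq | hlt
    · rw [heq] at hfa
      exact absurd (hfa.symm.trans hfb) (ne_of_lt hab)
    · have := hanti hUa hUb hlt
      rw [hfa, hfb] at this
      exact absurd hab (not_lt.2 this.le)
  have hstrict : StrictAntiOn
      (fun a : ℝ => (((k:ℝ)+3) * U a - ((k:ℝ)+1) / U a) / 2)
      (Set.Iic (gtAmax (k+4))) := by
    intro a ha b hb hab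
    have hUb0 : 0 < U b := hv.trans_le (Set.mem_Ici.1 (hU b hb).1)
    exact cc_lt k hUb0 (hUlt ha hb hab)
  refine ⟨hstrict, ⟨?_, hstrict.injOn, ?_⟩, ?_⟩
  · -- MapsTo
    intro a ha
    obtain ⟨hUa, _⟩ := hU a ha
    have hUa' : gtV (k+4) ≤ U a := Set.mem_Ici.1 hUa
    rcases eq_or_lt_of_le hUa' with heq | hlt
    · simp only [Set.mem_Ici]
      rw [← heq, cc_v k]
    · have := cc_lt k hv hlt
      rw [cc_v k] at this
      exact Set.mem_Ici.2 this.le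
  · -- SurjOn
    intro t ht
    have ht0 : (0:ℝ) ≤ t := Set.mem_Ici.1 ht
    set s := Real.sqrt (t^2 + ((k:ℝ)+3)*((k:ℝ)+1)) with hs_def
    have hs2 : s^2 = t^2 + ((k:ℝ)+3)*((k:ℝ)+1) := Real.sq_sqrt (by positivity)
    have hs0 : 0 < s := Real.sqrt_pos.2 (by positivity)
    set u0 := (t + s)/((k:ℝ)+3) with hu0_def
    have hu0 : 0 < u0 := div_pos (by linarith) (by positivity)
    have hkey : ((k:ℝ)+3)*u0^2 - 2*t*u0 - ((k:ℝ)+1) = 0 := by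
      rw [hu0_def]
      field_simp
      nlinarith [hs2]
    have hcu0 : (((k:ℝ)+3)*u0 - ((k:ℝ)+1)/u0)/2 = t := by
      have hne : u0 ≠ 0 := hu0.ne'
      field_simp
      nlinarith [hkey]
    have hu0v : gtV (k+4) ≤ u0 := by
      by_contra h
      push_neg at h
      have := cc_lt k hu0 h
      rw [cc_v k, hcu0] at this
      linarith
    have hfu0_le : gtF (k+4) u0 ≤ gtAmax (k+4) := by
      rcases eq_or_lt_of_le hu0v with heq | hlt
      · rw [← heq, gtF_v]
      · have := hanti (Set.mem_Ici.2 le_rfl) (Set.mem_Ici.2 hu0v) hlt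
        rw [gtF_v] at this
        exact this.le
    refine ⟨gtF (k+4) u0, Set.mem_Iic.2 hfu0_le, ?_⟩
    obtain ⟨hUm, hUf⟩ := hU _ hfu0_le
    have hUeq : U (gtF (k+4) u0) = u0 := hinj hUm (Set.mem_Ici.2 hu0v) hUf
    simp only
    rw [hUeq, hcu0]
  · -- c_0 = 1
    have h0le : (0:ℝ) ≤ gtAmax (k+4) := by
      have : gtAmax (k+4) = 2/((k:ℝ)+3) * gtV (k+4)^(k+1) := by
        have h43 : k+4-3 = k+1 := by omega
        rw [gtAmax, gt_cast1, h43]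
      rw [this]
      positivity
    obtain ⟨hU0, hf0⟩ := hU 0 h0le
    have hU0pos : 0 < U 0 := hv.trans_le (Set.mem_Ici.1 hU0)
    have h1 : (1 - (U 0)^2) * (U 0)^(k+1) = 0 := hf0
    have hp : (U 0)^(k+1) ≠ 0 := by positivity
    have h2 : 1 - (U 0)^2 = 0 := by
      rcases mul_eq_zero.1 h1 with h | h
      · exact h
      · exact absurd h hp
    have : U 0 = 1 := by nlinarith
    rw [this]
    ring
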